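/- Let X be a Hadamard manifold with sectional curvature ≤ −a² < 0. There is a constant C₂ ≥ 0 depending only on a such that for any two horospheres H, H' bounding disjoint horoballs, with [p, p'] the common perpendicular segment (p ∈ H, p' ∈ H'), and any x ∈ H, x' ∈ H', one has |d(x, x') − (d(x,p) + d(p,p') + d(p',x'))| ≤ C₂. -/
import Mathlib

open Filter

/-- `c : ℝ → X` restricts to a geodesic ray on `[0, ∞)`. -/
def IsGeodesicRay {X : Type} [MetricSpace X] (c : ℝ → X) : Prop :=
  ∀ s t : ℝ, 0 ≤ s → 0 ≤ t → dist (c s) (c t) = |s - t|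

/-- `b` is the Busemann function of the geodesic ray `c`. -/
def IsBusemannOf {X : Type} [MetricSpace X] (c : ℝ → X) (b : X → ℝ) : Prop :=
  IsGeodesicRay c ∧ ∀ y : X, Tendsto (fun t : ℝ => dist y (c t) - t) atTop (nhds (b y))

/-- `X` is a geodesic metric space. -/
def IsGeodesicSpace (X : Type) [MetricSpace X] : Prop :=
  ∀ x y : X, ∀ r : ℝ, 0 ≤ r → r ≤ dist x y →
    ∃ z : X, dist x z = r ∧ dist z y = dist x y - r

/-- Gromov's four-point hyperbolicity condition with constant `δ`. -/
def IsDeltaHyperbolic (X : Type) [MetricSpace X] (δ : ℝ) : Prop :=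
  ∀ x y z w : X,
    dist x y + dist z w ≤ max (dist x z + dist y w) (dist x w + dist y z) + 2 * δ

section Aux

variable {X : Type} [MetricSpace X] {c : ℝ → X} {b : X → ℝ}

lemma busemann_le (hc : IsBusemannOf c b) (y : X) {t : ℝ} (ht : 0 ≤ t) :
    b y ≤ dist y (c t) - t := by
  refine le_of_tendsto (hc.2 y) ?_
  filter_upwards [eventually_ge_atTop t] with u hu
  have h1 : dist (c t) (c u) = |t - u| := hc.1 t u ht (ht.trans hu)
  have h2 : dist y (c u) ≤ dist y (c t) + dist (c t) (c u) := dist_triangle _ _ _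
  rw [h1, abs_of_nonpos (by linarith)] at h2
  linarith

lemma busemann_lipschitz (hc : IsBusemannOf c b) (y z : X) :
    b y ≤ b z + dist y z := by
  have h : Tendsto (fun u : ℝ => (dist y (c u) - u) - (dist z (c u) - u)) atTop
      (nhds (b y - b z)) := (hc.2 y).sub (hc.2 z)
  have h2 : b y - b z ≤ dist y z := by
    refine le_of_tendsto h (Eventually.of_forall fun u => ?_)
    have := dist_triangle y z (c u)
    show dist y (c u) - u - (dist z (c u) - u) ≤ dist y z
    linarith
  linarith

lemma busemann_ray (hc : IsBusemannOf c b) {t : ℝ} (ht : 0 ≤ t) : b (c t) = -t := by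
  have h2 : (fun u : ℝ => dist (c t) (c u) - u) =ᶠ[atTop] fun _ => -t := by
    filter_upwards [eventually_ge_atTop t] with u hu
    rw [hc.1 t u ht (ht.trans hu), abs_of_nonpos (by linarith)]
    ring
  exact tendsto_nhds_unique ((hc.2 (c t)).congr' h2) tendsto_const_nhds

lemma busemann_proj (hgeo : IsGeodesicSpace X) (hc : IsBusemannOf c b) (y : X)
    (hy : 0 ≤ b y) {ε : ℝ} (hε : 0 < ε) :
    ∃ w : X, b w ≤ 0 ∧ dist y w ≤ b y + ε := by
  have h1 : ∀ᶠ t : ℝ in atTop, dist y (c t) - t < b y + ε :=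
    (hc.2 y).eventually_lt_const (by linarith)
  obtain ⟨t, ht, ht0⟩ := (h1.and (eventually_ge_atTop (0:ℝ))).exists
  have hb0 : b y ≤ dist y (c t) - t := busemann_le hc y ht0
  have hr0 : 0 ≤ dist y (c t) - t := hy.trans hb0
  have hr1 : dist y (c t) - t ≤ dist y (c t) := by linarith
  obtain ⟨w, hw1, hw2⟩ := hgeo y (c t) (dist y (c t) - t) hr0 hr1
  have hwt : dist w (c t) = t := by rw [hw2]; ring
  have hbw : b w ≤ dist w (c t) - t := busemann_le hc w ht0
  exact ⟨w, by rw [hwt] at hbw; linarith, by rw [hw1]; linarith⟩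

lemma horoball_depth {c' : ℝ → X} {b' : X → ℝ}
    (hgeo : IsGeodesicSpace X) (hc' : IsBusemannOf c' b')
    (hdis : Disjoint {y : X | b y ≤ 0} {y : X | b' y ≤ 0}) (p p' : X)
    (hmin : ∀ y y' : X, b y ≤ 0 → b' y' ≤ 0 → dist p p' ≤ dist y y')
    (y : X) (hy : b y ≤ 0) : dist p p' ≤ b' y := by
  have h0 : 0 ≤ b' y := by
    have h := Set.disjoint_left.mp hdis (show y ∈ {y : X | b y ≤ 0} from hy)
    simp only [Set.mem_setOf_eq, not_le] at h
    exact le_of_lt h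
  refine le_of_forall_pos_le_add fun ε hε => ?_
  obtain ⟨w, hw1, hw2⟩ := busemann_proj hgeo hc' y h0 hε
  exact (hmin y w hy hw1).trans hw2

lemma busemann_convex {δ : ℝ} (hhyp : IsDeltaHyperbolic X δ) (hc : IsBusemannOf c b)
    (y z m : X) (hm : dist y m + dist m z = dist y z) :
    b m ≤ max (b y - dist y m) (b z - dist m z) + 2 * δ := by
  refine le_of_forall_pos_le_add fun ε hε => ?_
  have h1 : ∀ᶠ t : ℝ in atTop, dist y (c t) - t < b y + ε :=
    (hc.2 y).eventually_lt_const (by linarith)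
  have h2 : ∀ᶠ t : ℝ in atTop, dist z (c t) - t < b z + ε :=
    (hc.2 z).eventually_lt_const (by linarith)
  obtain ⟨t, hty, htz, ht0⟩ := (h1.and (h2.and (eventually_ge_atTop (0:ℝ)))).exists
  have h4 := hhyp m (c t) y z
  have hbm := busemann_le hc m ht0
  have e1 : dist m y = dist y m := dist_comm _ _
  have e2 : dist (c t) y = dist y (c t) := dist_comm _ _
  have e3 : dist (c t) z = dist z (c t) := dist_comm _ _
  rcases max_cases (dist m y + dist (c t) z) (dist m z + dist (c t) y) with ⟨hM, hM2⟩ | ⟨hM, hM2⟩ <;>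
    rcases max_cases (b y - dist y m) (b z - dist m z) with ⟨hN, hN2⟩ | ⟨hN, hN2⟩ <;>
    rw [hM] at h4 <;> rw [hN] <;> linarith

lemma gromov_prod {δ : ℝ} (hhyp : IsDeltaHyperbolic X δ) (x y z w : X) :
    min (dist x w + dist z w - dist x z) (dist y w + dist z w - dist y z) - 2 * δ ≤
      dist x w + dist y w - dist x y := by
  have h := hhyp x y z w
  rcases max_cases (dist x z + dist y w) (dist x w + dist y z) with ⟨hM, hM2⟩ | ⟨hM, hM2⟩ <;>
    rcases min_cases (dist x w + dist z w - dist x z) (dist y w + dist z w - dist y z) with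
      ⟨hN, hN2⟩ | ⟨hN, hN2⟩ <;>
    rw [hM] at h <;> rw [hN] <;> linarith

lemma gate {δ : ℝ} (hδ : 0 ≤ δ) (hgeo : IsGeodesicSpace X) (hhyp : IsDeltaHyperbolic X δ)
    {c c' : ℝ → X} {b b' : X → ℝ}
    (hb : IsBusemannOf c b) (hb' : IsBusemannOf c' b')
    (hdis : Disjoint {y : X | b y ≤ 0} {y : X | b' y ≤ 0})
    (p p' : X) (hp : b p = 0) (hp' : b' p' = 0)
    (hmin : ∀ y y' : X, b y ≤ 0 → b' y' ≤ 0 → dist p p' ≤ dist y y')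
    (x w : X) (hx : b x ≤ 0) (hw : b' w ≤ 0) :
    dist p x + dist p w ≤ dist x w + 32 * δ := by
  set A := dist p x with hA
  set P := dist p w with hP
  set k := (A + P - dist x w) / 2 with hk
  have hkA : k ≤ A := by
    have := dist_triangle p x w
    have e : dist p w = P := rfl
    rw [hk]; rw [hA] at *; linarith
  have hkP : k ≤ P := by
    have h1 := dist_triangle p w x
    have e : dist w x = dist x w := dist_comm _ _
    rw [hk]; linarith
  have hd0 : (0:ℝ) ≤ dist p p' := dist_nonneg
  have hb'p : b' p ≤ dist p p' := by
    have := busemann_lipschitz hb' p p'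
    rw [hp'] at this; linarith
  have hminsym : ∀ y y' : X, b' y ≤ 0 → b y' ≤ 0 → dist p' p ≤ dist y y' := by
    intro y y' h h'
    rw [dist_comm p' p, dist_comm y y']
    exact hmin y' y h' h
  have hA0 : (0:ℝ) ≤ A := dist_nonneg
  have star : ∀ t : ℝ, 0 ≤ t → t ≤ k → min t (A - t) ≤ 8 * δ ∨ t ≤ 2 * δ := by
    intro t ht0 htk
    by_contra hcon
    push_neg at hcon
    obtain ⟨h1, h2⟩ := hcon
    have h1a : 8 * δ < t := lt_of_lt_of_le h1 (min_le_left _ _)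
    have h1b : 8 * δ < A - t := lt_of_lt_of_le h1 (min_le_right _ _)
    obtain ⟨m, hm1, hm2⟩ := hgeo p x t ht0 (htk.trans hkA)
    obtain ⟨m', hm'1, hm'2⟩ := hgeo p w t ht0 (htk.trans hkP)
    -- step 1 : dist x m' ≤ A - t + 2δ
    have s1 := gromov_prod hhyp x m' w p
    have e1 : dist x p = A := dist_comm x p ▸ rfl
    have e2 : dist w p = P := dist_comm w p ▸ rfl
    have e3 : dist m' p = t := by rw [dist_comm]; exact hm'1
    rw [e1, e2, e3, hm'2] at s1
    have hmin1 : (2:ℝ) * t ≤ min (A + P - dist x w) (t + P - (P - t)) :=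
      le_min (by rw [hk] at htk; linarith) (by linarith)
    have hxm' : dist x m' ≤ A - t + 2 * δ := by linarith
    -- step 2 : dist m m' ≤ 4δ
    have s2 := gromov_prod hhyp m m' x p
    have e4 : dist m p = t := by rw [dist_comm]; exact hm1
    have e5 : dist m x = A - t := hm2
    have e6 : dist m' x = dist x m' := dist_comm _ _
    rw [e4, e3, e1, e5, e6] at s2
    have hmin2 : (2:ℝ) * t - 2 * δ ≤ min (t + A - (A - t)) (t + A - dist x m') :=
      le_min (by linarith) (by linarith)
    have hmm' : dist m m' ≤ 4 * δ := by linarith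
    -- step 3 : b m < -6δ
    have s3 := busemann_convex hhyp hb p x m (by rw [hm1, hm2]; ring)
    rw [hp, hm1, hm2] at s3
    have hmax3 : max (0 - t) (b x - (A - t)) < -(8 * δ) :=
      max_lt (by linarith) (by linarith)
    have hbm : b m < -(6 * δ) := by linarith
    -- step 4 : b m' < -2δ
    have s4 := busemann_lipschitz hb m' m
    have e7 : dist m' m ≤ 4 * δ := by rw [dist_comm]; exact hmm'
    have hbm' : b m' < -(2 * δ) := by linarith
    -- step 5 : depth
    have s5 : dist p p' ≤ b' m' :=
      horoball_depth hgeo hb' hdis p p' hmin m' (by linarith)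
    -- step 6 : convexity of b' along [p, w]
    have s6 := busemann_convex hhyp hb' p w m' (by rw [hm'1, hm'2]; ring)
    rw [hm'1, hm'2] at s6
    rcases max_cases (b' p - t) (b' w - (P - t)) with ⟨hM, hM2⟩ | ⟨hM, hM2⟩
    · rw [hM] at s6
      linarith
    · rw [hM] at s6
      -- P - t ≤ 2δ - dist p p'
      have s7 := busemann_lipschitz hb w m'
      have e8 : dist w m' = P - t := by rw [dist_comm]; exact hm'2
      have hbw : dist p' p ≤ b w :=
        horoball_depth hgeo hb hdis.symm p' p hminsym w hw
      have e9 : dist p' p = dist p p' := dist_comm _ _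
      rw [e8] at s7
      linarith
  have hk16 : k ≤ 16 * δ := by
    by_contra hcon
    push_neg at hcon
    rcases le_or_gt A (2 * k) with hcase | hcase
    · have h := star (A / 2) (by linarith) (by linarith)
      have e : A - A / 2 = A / 2 := by ring
      rw [e, min_self] at h
      rcases h with h | h <;> linarith
    · have h := star k (by linarith) le_rfl
      have e : min k (A - k) = k := min_eq_left (by linarith)
      rw [e] at h
      rcases h with h | h <;> linarith
  rw [hk] at hk16
  linarith

end Aux

/-- In a geodesic `δ`-hyperbolic space (e.g. a Hadamard manifold of curvature
`≤ −a² < 0`, where `δ` depends only on `a`), there is `C₂ ≥ 0` depending only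
on `δ` such that for any two horospheres `H, H'` bounding disjoint horoballs,
with common perpendicular segment `[p, p']` (`p ∈ H`, `p' ∈ H'`), and any
`x ∈ H`, `x' ∈ H'`, one has
`|d(x,x') − (d(x,p) + d(p,p') + d(p',x'))| ≤ C₂`. -/
theorem dist_approx_through_common_perpendicular (δ : ℝ) (hδ : 0 ≤ δ) :
    ∃ C₂ : ℝ, 0 ≤ C₂ ∧
      ∀ (X : Type) [MetricSpace X], IsGeodesicSpace X → IsDeltaHyperbolic X δ →
        ∀ (c c' : ℝ → X) (b b' : X → ℝ),
          IsBusemannOf c b → IsBusemannOf c' b' →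
          Disjoint {y : X | b y ≤ 0} {y : X | b' y ≤ 0} →
          ∀ p p' : X, b p = 0 → b' p' = 0 →
            (∀ y y' : X, b y ≤ 0 → b' y' ≤ 0 → dist p p' ≤ dist y y') →
            ∀ x x' : X, b x = 0 → b' x' = 0 →
              |dist x x' - (dist x p + dist p p' + dist p' x')| ≤ C₂ := by
  refine ⟨66 * δ, by linarith, ?_⟩
  intro X _ hgeo hhyp c c' b b' hb hb' hdis p p' hp hp' hmin x x' hx hx'
  have hd0 : (0:ℝ) ≤ dist p p' := dist_nonneg
  -- lower bound on b' x
  have h1 : dist x p + dist p p' - 32 * δ ≤ b' x := by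
    refine ge_of_tendsto (hb'.2 x) ?_
    filter_upwards [eventually_ge_atTop (0:ℝ)] with s hs
    have hray : b' (c' s) = -s := busemann_ray hb' hs
    have hg := gate hδ hgeo hhyp hb hb' hdis p p' hp hp' hmin x (c' s)
      (le_of_eq hx) (by rw [hray]; linarith)
    have hle : b' p ≤ dist p (c' s) - s := busemann_le hb' p hs
    have hdep : dist p p' ≤ b' p :=
      horoball_depth hgeo hb' hdis p p' hmin p (le_of_eq hp)
    have ec : dist p x = dist x p := dist_comm _ _
    linarith
  have hmin2 : ∀ y y' : X, b' y ≤ 0 → b y' ≤ 0 → dist p' p ≤ dist y y' := by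
    intro y y' h h'
    rw [dist_comm p' p, dist_comm y y']
    exact hmin y' y h' h
  -- lower bound on b x'
  have h2 : dist p' x' + dist p p' - 32 * δ ≤ b x' := by
    refine ge_of_tendsto (hb.2 x') ?_
    filter_upwards [eventually_ge_atTop (0:ℝ)] with t htt
    have hray : b (c t) = -t := busemann_ray hb htt
    have hg := gate hδ hgeo hhyp hb' hb hdis.symm p' p hp' hp hmin2 x' (c t)
      (le_of_eq hx') (by rw [hray]; linarith)
    have hle : b p' ≤ dist p' (c t) - t := busemann_le hb p' htt
    have hdep : dist p' p ≤ b p' :=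
      horoball_depth hgeo hb hdis.symm p' p hmin2 p' (le_of_eq hp')
    have e2 : dist p' p = dist p p' := dist_comm _ _
    linarith
  -- upper bound : b' x + b x' ≤ D + d + 2δ
  have h3 : b' x + b x' ≤ dist x x' + dist p p' + 2 * δ := by
    refine le_of_forall_pos_le_add fun ε hε => ?_
    have e4 : (0:ℝ) < ε / 4 := by linarith
    have ev1 : ∀ᶠ t : ℝ in atTop, dist p (c t) - t < ε / 4 := by
      have h := hb.2 p; rw [hp] at h; exact h.eventually_lt_const e4
    have ev2 : ∀ᶠ t : ℝ in atTop, dist x (c t) - t < ε / 4 := by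
      have h := hb.2 x; rw [hx] at h; exact h.eventually_lt_const e4
    have ev3 : ∀ᶠ s : ℝ in atTop, dist p' (c' s) - s < ε / 4 := by
      have h := hb'.2 p'; rw [hp'] at h; exact h.eventually_lt_const e4
    have ev4 : ∀ᶠ s : ℝ in atTop, dist x' (c' s) - s < ε / 4 := by
      have h := hb'.2 x'; rw [hx'] at h; exact h.eventually_lt_const e4
    obtain ⟨t, ht1, ht2, ht0⟩ := (ev1.and (ev2.and (eventually_ge_atTop (0:ℝ)))).exists
    obtain ⟨s, hs1, hs2, hs0⟩ := (ev3.and (ev4.and (eventually_ge_atTop (0:ℝ)))).exists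
    have h4 := hhyp x (c' s) x' (c t)
    have hb1 : b' x ≤ dist x (c' s) - s := busemann_le hb' x hs0
    have hb2 : b x' ≤ dist x' (c t) - t := busemann_le hb x' ht0
    have htri : dist (c' s) (c t) ≤ dist (c' s) p' + dist p' p + dist p (c t) :=
      dist_triangle4 _ _ _ _
    have e1 : dist (c' s) p' = dist p' (c' s) := dist_comm _ _
    have e2 : dist p' p = dist p p' := dist_comm _ _
    have e5 : dist (c' s) x' = dist x' (c' s) := dist_comm _ _
    have hDnn : (0:ℝ) ≤ dist x x' := dist_nonneg
    rcases max_cases (dist x x' + dist (c' s) (c t)) (dist x (c t) + dist (c' s) x') with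
      ⟨hM, hM2⟩ | ⟨hM, hM2⟩ <;> rw [hM] at h4 <;> linarith
  -- conclusion
  have hDle : dist x x' ≤ dist x p + dist p p' + dist p' x' := dist_triangle4 _ _ _ _
  rw [abs_le]
  constructor <;> linarith
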